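/- Let u ∈ C̃²(T³) solve the reduced Calabi–Yau equation (u_xx + 1)(u_yy + u_tt + u_t + 1) − u_xy² − u_xt² = e^F with F continuous and 1-periodic. Then |u_x(x,y,t)| ≤ 1 for all (x,y,t) ∈ ℝ³. -/

import Mathlib

open MeasureTheory

noncomputable section

/-- Points of `ℝ³`, written as `ℝ × ℝ × ℝ`. -/
abbrev R3 := ℝ × ℝ × ℝ

/-- The coordinate direction `x`. -/
def vx : R3 := (1, 0, 0)
/-- The coordinate direction `y`. -/
def vy : R3 := (0, 1, 0)
/-- The coordinate direction `t`. -/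
def vt : R3 := (0, 0, 1)

/-- Partial (directional) derivative in the direction `e`. -/
def pd (e : R3) (u : R3 → ℝ) : R3 → ℝ := fun p => fderiv ℝ u p e

/-- `1`-periodicity in each of the three variables. -/
def Periodic3 (u : R3 → ℝ) : Prop :=
  ∀ p : R3, u (p + vx) = u p ∧ u (p + vy) = u p ∧ u (p + vt) = u p

/-- The unit cube `[0,1]³`. -/
def cube : Set R3 := Set.Icc (0, 0, 0) (1, 1, 1)

/-- Zero mean over the unit cube. -/
def ZeroMean (u : R3 → ℝ) : Prop := ∫ p in cube, u p = 0

/-- The reduced Calabi–Yau equation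
`(u_xx + 1)(u_yy + u_tt + u_t + 1) − u_xy² − u_xt² = e^F` on `ℝ³`. -/
def CYeq (F u : R3 → ℝ) : Prop :=
  ∀ p : R3,
    (pd vx (pd vx u) p + 1)
        * (pd vy (pd vy u) p + pd vt (pd vt u) p + pd vt u p + 1)
      - (pd vy (pd vx u) p) ^ 2 - (pd vt (pd vx u) p) ^ 2 = Real.exp (F p)

/-- The Euclidean norm on `ℝ³ = ℝ × ℝ × ℝ`. -/
def enorm3 (h : R3) : ℝ := Real.sqrt (h.1 ^ 2 + h.2.1 ^ 2 + h.2.2 ^ 2)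

/-- For a `C²` `1`-periodic zero-mean solution `u` of the reduced
Calabi–Yau equation, `|u_x| ≤ 1` everywhere. -/
theorem stmt5 (F u : R3 → ℝ) (hF : Continuous F) (hFper : Periodic3 F)
    (hu : ContDiff ℝ 2 u) (huper : Periodic3 u) (humean : ZeroMean u)
    (hsol : CYeq F u) :
    ∀ p : R3, |pd vx u p| ≤ 1 := by
  set w : R3 → ℝ := pd vx u with hw
  -- u is differentiable
  have hud : Differentiable ℝ u := hu.differentiable (by norm_num)
  -- fderiv u is C¹
  have hfd : ContDiff ℝ 1 (fderiv ℝ u) := hu.fderiv_right (by norm_num)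
  -- w is C¹
  have hw1 : ContDiff ℝ 1 w := hfd.clm_apply contDiff_const
  have hwd : Differentiable ℝ w := hw1.differentiable (by norm_num)
  -- A := u_xx + 1 is continuous
  set A : R3 → ℝ := fun p => fderiv ℝ w p vx + 1 with hA
  have hAcont : Continuous A := by
    have : Continuous (fderiv ℝ w) := (hw1.fderiv_right (m := 0) le_rfl).continuous
    exact ((this.clm_apply continuous_const)).add continuous_const
  -- periodicity of fderiv u
  have hfdper : ∀ (v : R3), (∀ q : R3, u (q + v) = u q) →
      ∀ p : R3, fderiv ℝ u (p + v) = fderiv ℝ u p := by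
    intro v hv p
    have h1 : HasFDerivAt (fun q : R3 => q + v) (ContinuousLinearMap.id ℝ R3) p := by
      simpa using (hasFDerivAt_id p).add_const v
    have h2 : HasFDerivAt (fun q : R3 => u (q + v)) (fderiv ℝ u (p + v)) p := by
      simpa [Function.comp_def] using ((hud (p + v)).hasFDerivAt.comp p h1)
    have h3 : (fun q : R3 => u (q + v)) = u := funext hv
    rw [h3] at h2
    exact ((hud p).hasFDerivAt.unique h2).symm
  have hwperx : ∀ p : R3, w (p + vx) = w p := fun p => by
    simp only [hw, pd, hfdper vx (fun q => (huper q).1) p]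
  -- the line through p in direction vx
  have hL : ∀ (p : R3) (x : ℝ), HasDerivAt (fun x : ℝ => p + x • vx) vx x := by
    intro p x
    simpa using (((hasDerivAt_id x).smul_const vx).const_add p)
  have hphi : ∀ (p : R3) (x : ℝ),
      HasDerivAt (fun x : ℝ => u (p + x • vx)) (w (p + x • vx)) x := by
    intro p x
    exact (hud (p + x • vx)).hasFDerivAt.comp_hasDerivAt x (hL p x)
  have hpsi : ∀ (p : R3) (x : ℝ),
      HasDerivAt (fun x : ℝ => w (p + x • vx)) (A (p + x • vx) - 1) x := by
    intro p x
    have := (hwd (p + x • vx)).hasFDerivAt.comp_hasDerivAt x (hL p x)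
    simpa [hA, Function.comp_def] using this
  -- A never vanishes
  have hAne : ∀ p : R3, A p ≠ 0 := by
    intro p hp
    have h := hsol p
    have hp' : pd vx (pd vx u) p + 1 = 0 := hp
    rw [hp', zero_mul] at h
    nlinarith [Real.exp_pos (F p), sq_nonneg (pd vy (pd vx u) p),
      sq_nonneg (pd vt (pd vx u) p)]
  -- A is everywhere positive
  have hApos : ∀ p : R3, 0 < A p := by
    have hnoneg : ¬ ∃ p : R3, A p < 0 := by
      rintro ⟨p, hp⟩
      have hall : ∀ q : R3, A q < 0 := by
        intro q
        rcases (hAne q).lt_or_gt with h | h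
        · exact h
        · exfalso
          have : (0 : ℝ) ∈ Set.Icc (A p) (A q) := ⟨hp.le, h.le⟩
          obtain ⟨r, hr⟩ := intermediate_value_univ p q hAcont this
          exact hAne r hr
      obtain ⟨c, _, hc⟩ := exists_hasDerivAt_eq_slope (fun x : ℝ => u (p + x • vx))
        (fun x => w (p + x • vx)) (by norm_num : (0:ℝ) < 1)
        (fun x _ => ((hphi p x).continuousAt).continuousWithinAt)
        (fun x _ => hphi p x)
      obtain ⟨c', _, hc'⟩ := exists_hasDerivAt_eq_slope (fun x : ℝ => w (p + x • vx))
        (fun x => A (p + x • vx) - 1) (by norm_num : (0:ℝ) < 1)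
        (fun x _ => ((hpsi p x).continuousAt).continuousWithinAt)
        (fun x _ => hpsi p x)
      have hper : w (p + (1:ℝ) • vx) = w (p + (0:ℝ) • vx) := by
        simpa using hwperx p
      rw [hper] at hc'
      simp at hc'
      linarith [hall (p + c' • vx)]
    intro p
    rcases (hAne p).lt_or_gt with h | h
    · exact absurd ⟨p, h⟩ hnoneg
    · exact h
  -- main argument
  intro p
  set ψ : ℝ → ℝ := fun x => w (p + x • vx) + x with hψ
  have hψd : ∀ x, HasDerivAt ψ (A (p + x • vx)) x := by
    intro x
    simpa [Pi.add_def] using (hpsi p x).add (hasDerivAt_id x)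
  have hψmono : StrictMono ψ :=
    strictMono_of_hasDerivAt_pos hψd (fun x => hApos _)
  -- MVT on [0,1]
  have hper1 : u (p + (1:ℝ) • vx) = u (p + (0:ℝ) • vx) := by
    simpa using (huper p).1
  obtain ⟨c, hcmem, hc⟩ := exists_hasDerivAt_eq_slope (fun x : ℝ => u (p + x • vx))
    (fun x => w (p + x • vx)) (by norm_num : (0:ℝ) < 1)
    (fun x _ => ((hphi p x).continuousAt).continuousWithinAt)
    (fun x _ => hphi p x)
  rw [hper1] at hc
  simp at hc
  -- MVT on [-1,0]
  have hper2 : u (p + (0:ℝ) • vx) = u (p + (-1:ℝ) • vx) := by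
    have := (huper (p + (-1:ℝ) • vx)).1
    have h3 : p + (-1:ℝ) • vx + vx = p + (0:ℝ) • vx := by
      simp [add_assoc]
    rw [h3] at this
    exact this
  obtain ⟨d, hdmem, hd⟩ := exists_hasDerivAt_eq_slope (fun x : ℝ => u (p + x • vx))
    (fun x => w (p + x • vx)) (by norm_num : (-1:ℝ) < 0)
    (fun x _ => ((hphi p x).continuousAt).continuousWithinAt)
    (fun x _ => hphi p x)
  rw [← hper2] at hd
  simp at hd
  -- conclude
  have hψ0 : ψ 0 = w p := by simp [hψ]
  have hψc : ψ c = c := by simp [hψ, hc]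
  have hψd' : ψ d = d := by simp [hψ, hd]
  have h1 : ψ d < ψ 0 := hψmono hdmem.2
  have h2 : ψ 0 < ψ c := hψmono hcmem.1
  rw [hψ0, hψd'] at h1
  rw [hψ0, hψc] at h2
  have : |w p| < 1 := abs_lt.mpr ⟨lt_of_le_of_lt hdmem.1.le h1, lt_trans h2 hcmem.2⟩
  exact this.le

end
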